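/- Let n and p be positive integers, m_1, …, m_p positive integers with m := m_1 + ⋯ + m_p ≤ n, and f_1, …, f_p complex numbers with positive real part. Then Σ_{j=0}^n (−1)^j C(n,j) ∏_{i=1}^p (f_i + j)_{m_i} equals 0 if m < n, and equals (−1)^n n! if m = n. Equivalently, (f_1)_{m_1} ⋯ (f_p)_{m_p} · Σ_{j=0}^n ((−n)_j ∏_{i=1}^p (f_i+m_i)_j) / (j! ∏_{i=1}^p (f_i)_j) = (−m)_n. -/
import Mathlib

open Finset Polynomial
open scoped fwdDiff

/-- Pochhammer symbol `(z)_k = z (z+1) ⋯ (z+k-1)` for complex `z`. -/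
noncomputable def cpoch (z : ℂ) (k : ℕ) : ℂ := ∏ i ∈ Finset.range k, (z + i)

private lemma fwdDiff_pow_succ (k : ℕ) :
    Δ_[(1:ℂ)] (fun x : ℂ => x ^ k) = fun x => ∑ i ∈ range k, (k.choose i : ℂ) * x ^ i := by
  funext x
  have h := add_pow x (1:ℂ) k
  simp only [one_pow, mul_one] at h
  have h2 : ∑ i ∈ range (k+1), x ^ i * (k.choose i : ℂ)
      = (∑ i ∈ range k, (k.choose i : ℂ) * x ^ i) + x ^ k := by
    rw [Finset.sum_range_succ]; simp [mul_comm]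
  simp only [fwdDiff, h, h2]
  ring

private lemma fwdDiff_iter_pow_lt : ∀ n : ℕ, ∀ k < n,
    (Δ_[(1:ℂ)])^[n] (fun x : ℂ => x ^ k) = fun _ => 0 := by
  intro n
  induction n with
  | zero => omega
  | succ n ih =>
    intro k hk
    rw [Function.iterate_succ_apply, fwdDiff_pow_succ]
    have : (fun x : ℂ => ∑ i ∈ range k, (k.choose i : ℂ) * x ^ i)
        = ∑ i ∈ range k, (k.choose i : ℂ) • (fun y : ℂ => y ^ i) := by
      funext x; rw [Finset.sum_apply]; simp [smul_eq_mul]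
    rw [this, fwdDiff_iter_finset_sum]
    funext y
    rw [Finset.sum_apply]
    apply Finset.sum_eq_zero
    intro i hi
    have hi' : i < n := lt_of_lt_of_le (mem_range.mp hi) (Nat.lt_succ_iff.mp hk)
    rw [fwdDiff_iter_const_smul, ih i hi']
    simp

private lemma fwdDiff_iter_pow_self : ∀ n : ℕ,
    (Δ_[(1:ℂ)])^[n] (fun x : ℂ => x ^ n) = fun _ => (n.factorial : ℂ) := by
  intro n
  induction n with
  | zero => funext x; simp
  | succ n ih =>
    rw [Function.iterate_succ_apply, fwdDiff_pow_succ]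
    have : (fun x : ℂ => ∑ i ∈ range (n+1), ((n+1).choose i : ℂ) * x ^ i)
        = ∑ i ∈ range (n+1), ((n+1).choose i : ℂ) • (fun y : ℂ => y ^ i) := by
      funext x; rw [Finset.sum_apply]; simp [smul_eq_mul]
    rw [this, fwdDiff_iter_finset_sum]
    funext y
    rw [Finset.sum_apply]
    simp only [fwdDiff_iter_const_smul, Pi.smul_apply]
    rw [Finset.sum_range_succ]
    have h0 : ∀ i ∈ range n, ((n+1).choose i : ℂ) • ((Δ_[(1:ℂ)])^[n] (fun y : ℂ => y ^ i)) y = 0 := by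
      intro i hi
      rw [fwdDiff_iter_pow_lt n i (mem_range.mp hi)]
      simp
    rw [Finset.sum_eq_zero h0, ih]
    simp [Nat.factorial_succ, smul_eq_mul]

private lemma sum_eq_fwdDiff (F : ℂ → ℂ) (n : ℕ) :
    ∑ j ∈ Finset.range (n+1), (-1:ℂ)^j * (n.choose j : ℂ) * F j
      = (-1:ℂ)^n * (Δ_[(1:ℂ)])^[n] F 0 := by
  rw [fwdDiff_iter_eq_sum_shift, Finset.mul_sum]
  apply Finset.sum_congr rfl
  intro j hj
  have hj' : j ≤ n := Nat.lt_succ_iff.mp (mem_range.mp hj)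
  have h1 : (0:ℂ) + j • (1:ℂ) = (j:ℂ) := by simp
  rw [h1, zsmul_eq_mul]
  push_cast
  have h2 : (-1:ℂ)^n * (-1:ℂ)^(n-j) = (-1:ℂ)^j := by
    rw [← pow_add]
    have : n + (n - j) = 2 * (n - j) + j := by omega
    rw [this, pow_add, pow_mul]
    simp
  rw [← mul_assoc, ← mul_assoc, h2]

private lemma poly_alt_sum (n : ℕ) (P : ℂ[X]) (hd : P.natDegree < n + 1) :
    ∑ j ∈ Finset.range (n+1), (-1:ℂ)^j * (n.choose j : ℂ) * P.eval (j:ℂ)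
      = (-1:ℂ)^n * P.coeff n * n.factorial := by
  rw [sum_eq_fwdDiff (fun x => P.eval x) n]
  have hFe : (fun x : ℂ => P.eval x)
      = ∑ k ∈ range (n+1), P.coeff k • (fun y : ℂ => y ^ k) := by
    funext x
    rw [Finset.sum_apply, eval_eq_sum_range' hd]
    simp [smul_eq_mul]
  rw [hFe, fwdDiff_iter_finset_sum, Finset.sum_apply]
  simp only [fwdDiff_iter_const_smul, Pi.smul_apply]
  rw [Finset.sum_range_succ, Finset.sum_eq_zero, fwdDiff_iter_pow_self]
  · simp [smul_eq_mul]; ring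
  · intro k hk
    rw [fwdDiff_iter_pow_lt n k (mem_range.mp hk)]
    simp

theorem hypergeometric_sum_formula (n p : ℕ) (hn : 1 ≤ n) (hp : 1 ≤ p)
    (m : Fin p → ℕ) (hm : ∀ i, 1 ≤ m i) (hmn : ∑ i, m i ≤ n)
    (f : Fin p → ℂ) (hf : ∀ i, 0 < (f i).re) :
    (∑ i, m i < n →
      ∑ j ∈ Finset.range (n + 1),
        (-1 : ℂ) ^ j * (n.choose j : ℂ) * ∏ i, cpoch (f i + j) (m i) = 0) ∧
    (∑ i, m i = n →
      ∑ j ∈ Finset.range (n + 1),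
        (-1 : ℂ) ^ j * (n.choose j : ℂ) * ∏ i, cpoch (f i + j) (m i)
        = (-1 : ℂ) ^ n * (n.factorial : ℂ)) := by
  classical
  let P : ℂ[X] := ∏ i, ∏ t ∈ range (m i), (X + C (f i + t))
  have hmonic : P.Monic := by
    apply monic_prod_of_monic
    intro i _
    exact monic_prod_of_monic _ _ (fun t _ => monic_X_add_C _)
  have hdeg : P.natDegree = ∑ i, m i := by
    show (∏ i, ∏ t ∈ range (m i), (X + C (f i + t))).natDegree = _
    rw [natDegree_prod]
    · apply Finset.sum_congr rfl
      intro i _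
      rw [natDegree_prod]
      · simp only [natDegree_X_add_C, Finset.sum_const, card_range, smul_eq_mul, mul_one]
      · exact fun t _ => (monic_X_add_C _).ne_zero
    · intro i _
      exact (monic_prod_of_monic _ _ (fun t _ => monic_X_add_C _)).ne_zero
  have heval : ∀ j : ℕ, P.eval (j:ℂ) = ∏ i, cpoch (f i + j) (m i) := by
    intro j
    show eval _ (∏ i, ∏ t ∈ range (m i), (X + C (f i + t))) = _
    rw [eval_prod]
    apply Finset.prod_congr rfl
    intro i _
    rw [eval_prod, cpoch]
    apply Finset.prod_congr rfl
    intro t _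
    simp only [eval_add, eval_X, eval_C]
    ring
  have hsum : ∑ j ∈ Finset.range (n + 1),
      (-1 : ℂ) ^ j * (n.choose j : ℂ) * ∏ i, cpoch (f i + j) (m i)
      = (-1:ℂ)^n * P.coeff n * n.factorial := by
    rw [← poly_alt_sum n P (by omega)]
    exact Finset.sum_congr rfl (fun j _ => by rw [heval])
  constructor
  · intro hlt
    rw [hsum, coeff_eq_zero_of_natDegree_lt (by omega)]
    ring
  · intro heq
    have hc : P.coeff n = 1 := by
      have := hmonic.leadingCoeff
      rwa [Polynomial.leadingCoeff, hdeg, heq] at this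
    rw [hsum, hc, mul_one]
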